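/- With α_k = 1/(n-k), for all integers i,j ≥ 2 with i+j ≤ n-2 and all 1 ≤ p ≤ n-i-j-1, the identity (∑_{s=0}^{i-2} (-1)^{i+s} C(i-2,s) α_{p+s})·(∑_{r=0}^{j-2} (-1)^{j+r} C(j-2,r) α_{p+i+r}) - (∑_{r=0}^{j-2} (-1)^{j+r} C(j-2,r) α_{p+r})·(∑_{s=0}^{i-2} (-1)^{i+s} C(i-2,s) α_{p+j+s}) + ((i-j)(i-2)!(j-2)!/(i+j-2)!)·∑_{s=0}^{i+j-2} (-1)^{i+j+s} C(i+j-2,s) α_{p+s} = 0 holds. -/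

import Mathlib

lemma key (m : ℕ) (x : ℂ) (hx : ∀ k ∈ Finset.range (m+1), x + k ≠ 0) :
    ∑ s ∈ Finset.range (m+1), (-1 : ℂ)^s * (m.choose s) / (x + s)
      = m.factorial / ∏ k ∈ Finset.range (m+1), (x + k) := by
  induction m generalizing x with
  | zero => simp
  | succ m ih =>
    have hx0 : x ≠ 0 := by simpa using hx 0 (by simp)
    have hxs : ∀ k ∈ Finset.range (m+1), (x+1) + k ≠ 0 := by
      intro k hk
      intro hc
      refine hx (k+1) (by simp at hk ⊢; omega) ?_
      push_cast
      linear_combination hc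
    have hx' : ∀ k ∈ Finset.range (m+1), x + k ≠ 0 := fun k hk =>
      hx k (Finset.mem_range.mpr (by simp at hk; omega))
    have hm1 : x + ((m+1 : ℕ) : ℂ) ≠ 0 := hx (m+1) (by simp)
    set g : ℕ → ℂ := fun s => (-1 : ℂ)^s * (m.choose s) / (x + s) with hg
    set g1 : ℕ → ℂ := fun s => (-1 : ℂ)^s * ((m+1).choose s) / (x + s) with hg1
    have happ := ih (x+1) hxs
    have happ0 := ih x hx'
    -- sum manipulation
    have c1 : ∑ s ∈ Finset.range (m+2), g1 s
        = (∑ s ∈ Finset.range (m+1), g1 (s+1)) + g1 0 := Finset.sum_range_succ' g1 (m+1)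
    have c2 : ∀ s, g1 (s+1) = (-1 : ℂ)^(s+1) * (m.choose s) / (x + ((s+1 : ℕ) : ℂ)) + g (s+1) := by
      intro s
      simp only [hg, hg1, Nat.choose_succ_succ']
      push_cast
      ring
    have c3 : (∑ s ∈ Finset.range (m+1), g (s+1)) + g 0 = ∑ s ∈ Finset.range (m+1), g s := by
      rw [← Finset.sum_range_succ' g (m+1), Finset.sum_range_succ]
      simp [hg]
    have c4 : ∑ s ∈ Finset.range (m+1), (-1 : ℂ)^(s+1) * (m.choose s) / (x + ((s+1 : ℕ) : ℂ))
        = - ∑ s ∈ Finset.range (m+1), (-1 : ℂ)^s * (m.choose s) / ((x+1) + s) := by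
      rw [← Finset.sum_neg_distrib]
      refine Finset.sum_congr rfl fun s _ => ?_
      push_cast
      ring
    have g10 : g1 0 = g 0 := by simp [hg, hg1]
    have main : ∑ s ∈ Finset.range (m+2), g1 s
        = (∑ s ∈ Finset.range (m+1), g s)
          - ∑ s ∈ Finset.range (m+1), (-1 : ℂ)^s * (m.choose s) / ((x+1) + s) := by
      rw [c1, Finset.sum_congr rfl (fun s _ => c2 s), Finset.sum_add_distrib, c4, g10]
      linear_combination c3
    -- product manipulation
    set Q : ℂ := ∏ k ∈ Finset.range (m+2), (x + k) with hQ
    set Q1 : ℂ := ∏ k ∈ Finset.range (m+1), (x + k) with hQ1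
    set Q2 : ℂ := ∏ k ∈ Finset.range (m+1), ((x+1) + k) with hQ2
    have hQa : Q = Q1 * (x + ((m+1 : ℕ) : ℂ)) := Finset.prod_range_succ _ (m+1)
    have hQb : Q = Q2 * x := by
      rw [hQ, Finset.prod_range_succ' (fun k => x + (k : ℂ)) (m+1)]
      congr 1
      · refine Finset.prod_congr rfl fun k _ => ?_
        push_cast
        ring
      · simp
    have hQ1ne : Q1 ≠ 0 := Finset.prod_ne_zero_iff.mpr hx'
    have hQ2ne : Q2 ≠ 0 := Finset.prod_ne_zero_iff.mpr hxs
    have hQne : Q ≠ 0 := by rw [hQa]; exact mul_ne_zero hQ1ne hm1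
    have d1 : (m.factorial : ℂ)/Q1 = m.factorial * (x + ((m+1 : ℕ) : ℂ))/Q := by
      rw [div_eq_div_iff hQ1ne hQne, hQa]; ring
    have d2 : (m.factorial : ℂ)/Q2 = m.factorial * x/Q := by
      rw [div_eq_div_iff hQ2ne hQne, hQb]; ring
    rw [main, happ0, happ, d1, d2, div_sub_div_same]
    congr 1
    push_cast [Nat.factorial_succ]
    ring

lemma key3 (m : ℕ) (y : ℂ) (hy : ∀ k ∈ Finset.range (m+1), y - k ≠ 0) :
    ∑ s ∈ Finset.range (m+1), (-1 : ℂ)^(m+s) * (m.choose s) * (1/(y - s))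
      = m.factorial / ∏ k ∈ Finset.range (m+1), (y - k) := by
  have hx : ∀ k ∈ Finset.range (m+1), -y + k ≠ 0 := by
    intro k hk hc
    exact hy k hk (by linear_combination -hc)
  have h := key m (-y) hx
  have hprod : ∏ k ∈ Finset.range (m+1), (-y + (k : ℂ))
      = (-1 : ℂ)^(m+1) * ∏ k ∈ Finset.range (m+1), (y - k) := by
    have e : ∏ k ∈ Finset.range (m+1), (-y + (k:ℂ))
        = ∏ k ∈ Finset.range (m+1), (-1*(y-(k:ℂ))) :=
      Finset.prod_congr rfl (fun k _ => by ring)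
    rw [e, Finset.prod_mul_distrib, Finset.prod_const, Finset.card_range]
  have hsum : ∑ s ∈ Finset.range (m+1), (-1 : ℂ)^(m+s) * (m.choose s) * (1/(y - s))
      = (-1 : ℂ)^(m+1) * ∑ s ∈ Finset.range (m+1), (-1 : ℂ)^s * (m.choose s) / (-y + s) := by
    rw [Finset.mul_sum]
    refine Finset.sum_congr rfl fun s _ => ?_
    rcases eq_or_ne (y - s) 0 with h0 | h0
    · have : -y + (s:ℂ) = 0 := by linear_combination -h0
      rw [h0, this]
      simp
    · have hne : -y + (s:ℂ) ≠ 0 := fun hc => h0 (by linear_combination -hc)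
      field_simp
      ring
  have hP : ∏ k ∈ Finset.range (m+1), (y - (k:ℂ)) ≠ 0 := Finset.prod_ne_zero_iff.mpr hy
  rw [hsum, h, hprod]
  have hne : ((-1:ℂ))^(m+1) ≠ 0 := by
    apply pow_ne_zero; norm_num
  field_simp

/-- With `α_k = 1/(n-k)`, the compatibility identity for the structure
constants of the minimal representation of the truncated Witt algebra: for
`i, j ≥ 2` with `i + j ≤ n - 2` and `1 ≤ p ≤ n - i - j - 1`,
`(∑_{s=0}^{i-2} (-1)^{i+s} C(i-2,s) α_{p+s})(∑_{r=0}^{j-2} (-1)^{j+r} C(j-2,r) α_{p+i+r})`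
`- (∑_{r=0}^{j-2} (-1)^{j+r} C(j-2,r) α_{p+r})(∑_{s=0}^{i-2} (-1)^{i+s} C(i-2,s) α_{p+j+s})`
`+ ((i-j)(i-2)!(j-2)!/(i+j-2)!) ∑_{s=0}^{i+j-2} (-1)^{i+j+s} C(i+j-2,s) α_{p+s} = 0`. -/
theorem witt_structure_constant_identity (n i j p : ℕ)
    (hi : 2 ≤ i) (hj : 2 ≤ j) (hij : i + j ≤ n - 2)
    (hp1 : 1 ≤ p) (hp2 : p ≤ n - i - j - 1) :
    (∑ s ∈ Finset.range (i - 1),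
        (-1 : ℂ) ^ (i + s) * ((i - 2).choose s : ℂ) * (1 / ((n : ℂ) - (p + s : ℕ))))
      * (∑ r ∈ Finset.range (j - 1),
        (-1 : ℂ) ^ (j + r) * ((j - 2).choose r : ℂ) * (1 / ((n : ℂ) - (p + i + r : ℕ))))
    - (∑ r ∈ Finset.range (j - 1),
        (-1 : ℂ) ^ (j + r) * ((j - 2).choose r : ℂ) * (1 / ((n : ℂ) - (p + r : ℕ))))
      * (∑ s ∈ Finset.range (i - 1),
        (-1 : ℂ) ^ (i + s) * ((i - 2).choose s : ℂ) * (1 / ((n : ℂ) - (p + j + s : ℕ))))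
    + (((i : ℂ) - (j : ℂ)) * ((i - 2).factorial : ℂ) * ((j - 2).factorial : ℂ)
          / ((i + j - 2).factorial : ℂ))
      * (∑ s ∈ Finset.range (i + j - 1),
        (-1 : ℂ) ^ (i + j + s) * ((i + j - 2).choose s : ℂ)
          * (1 / ((n : ℂ) - (p + s : ℕ)))) = 0 := by
  obtain ⟨a, rfl⟩ := Nat.exists_eq_add_of_le hi
  obtain ⟨b, rfl⟩ := Nat.exists_eq_add_of_le hj
  have hn : 2 + a + (2 + b) + 2 ≤ n := by omega
  have hpbound : p + (a + b + 2) + 3 ≤ n := by omega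
  have cast_ne : ∀ q : ℕ, q < n → (n : ℂ) - q ≠ 0 := by
    intro q hq hc
    have h1 : (n : ℂ) = q := sub_eq_zero.mp hc
    have : n = q := by exact_mod_cast h1
    omega
  set N : ℂ := (n : ℂ) - p with hN
  simp only [show 2+a-1 = a+1 from by omega, show 2+a-2 = a from by omega,
    show 2+b-1 = b+1 from by omega, show 2+b-2 = b from by omega,
    show 2+a+(2+b)-1 = a+b+3 from by omega, show 2+a+(2+b)-2 = a+b+2 from by omega]
  -- the five sums
  have S1 : ∑ s ∈ Finset.range (a+1),
      (-1 : ℂ) ^ (2+a + s) * ((a.choose s) : ℂ) * (1 / ((n : ℂ) - (p + s : ℕ)))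
      = (a.factorial : ℂ) / ∏ k ∈ Finset.range (a+1), (N - k) := by
    rw [← key3 a N (fun k hk => by
      simp only [Finset.mem_range] at hk
      have : (N - (k:ℂ)) = (n:ℂ) - ((p + k : ℕ) : ℂ) := by push_cast [hN]; ring
      rw [this]; exact cast_ne _ (by omega))]
    refine Finset.sum_congr rfl fun s hs => ?_
    rw [show 2+a+s = (a+s)+2 from by ring, pow_add, neg_one_sq, mul_one]
    push_cast [hN]
    ring
  have S2 : ∑ r ∈ Finset.range (b+1),
      (-1 : ℂ) ^ (2+b + r) * ((b.choose r) : ℂ) * (1 / ((n : ℂ) - (p + (2+a) + r : ℕ)))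
      = (b.factorial : ℂ) / ∏ k ∈ Finset.range (b+1), ((N - (2+a : ℕ)) - k) := by
    rw [← key3 b (N - (2+a:ℕ)) (fun k hk => by
      simp only [Finset.mem_range] at hk
      have : (N - ((2+a:ℕ):ℂ) - (k:ℂ)) = (n:ℂ) - ((p + (2+a) + k : ℕ) : ℂ) := by
        push_cast [hN]; ring
      rw [this]; exact cast_ne _ (by omega))]
    refine Finset.sum_congr rfl fun s hs => ?_
    rw [show 2+b+s = (b+s)+2 from by ring, pow_add, neg_one_sq, mul_one]
    push_cast [hN]
    ring
  have S3 : ∑ r ∈ Finset.range (b+1),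
      (-1 : ℂ) ^ (2+b + r) * ((b.choose r) : ℂ) * (1 / ((n : ℂ) - (p + r : ℕ)))
      = (b.factorial : ℂ) / ∏ k ∈ Finset.range (b+1), (N - k) := by
    rw [← key3 b N (fun k hk => by
      simp only [Finset.mem_range] at hk
      have : (N - (k:ℂ)) = (n:ℂ) - ((p + k : ℕ) : ℂ) := by push_cast [hN]; ring
      rw [this]; exact cast_ne _ (by omega))]
    refine Finset.sum_congr rfl fun s hs => ?_
    rw [show 2+b+s = (b+s)+2 from by ring, pow_add, neg_one_sq, mul_one]
    push_cast [hN]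
    ring
  have S4 : ∑ s ∈ Finset.range (a+1),
      (-1 : ℂ) ^ (2+a + s) * ((a.choose s) : ℂ) * (1 / ((n : ℂ) - (p + (2+b) + s : ℕ)))
      = (a.factorial : ℂ) / ∏ k ∈ Finset.range (a+1), ((N - (2+b : ℕ)) - k) := by
    rw [← key3 a (N - (2+b:ℕ)) (fun k hk => by
      simp only [Finset.mem_range] at hk
      have : (N - ((2+b:ℕ):ℂ) - (k:ℂ)) = (n:ℂ) - ((p + (2+b) + k : ℕ) : ℂ) := by
        push_cast [hN]; ring
      rw [this]; exact cast_ne _ (by omega))]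
    refine Finset.sum_congr rfl fun s hs => ?_
    rw [show 2+a+s = (a+s)+2 from by ring, pow_add, neg_one_sq, mul_one]
    push_cast [hN]
    ring
  have S5 : ∑ s ∈ Finset.range (a+b+3),
      (-1 : ℂ) ^ (2+a+(2+b) + s) * (((a+b+2).choose s) : ℂ) * (1 / ((n : ℂ) - (p + s : ℕ)))
      = ((a+b+2).factorial : ℂ) / ∏ k ∈ Finset.range (a+b+3), (N - k) := by
    rw [show a+b+3 = (a+b+2)+1 from by ring]
    rw [← key3 (a+b+2) N (fun k hk => by
      simp only [Finset.mem_range] at hk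
      have : (N - (k:ℂ)) = (n:ℂ) - ((p + k : ℕ) : ℂ) := by push_cast [hN]; ring
      rw [this]; exact cast_ne _ (by omega))]
    refine Finset.sum_congr rfl fun s hs => ?_
    rw [show 2+a+(2+b)+s = ((a+b+2)+s)+2 from by ring, pow_add, neg_one_sq, mul_one]
    push_cast [hN]
    ring
  rw [S1, S2, S3, S4, S5]
  -- nonzeroness of products
  have hnzN : ∀ k : ℕ, k ≤ a+b+2 → N - (k:ℂ) ≠ 0 := by
    intro k hk
    have : (N - (k:ℂ)) = (n:ℂ) - ((p + k : ℕ) : ℂ) := by push_cast [hN]; ring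
    rw [this]; exact cast_ne _ (by omega)
  set P1 : ℂ := ∏ k ∈ Finset.range (a+1), (N - k) with hP1
  set P2 : ℂ := ∏ k ∈ Finset.range (b+1), ((N - (2+a : ℕ)) - k) with hP2
  set P3 : ℂ := ∏ k ∈ Finset.range (b+1), (N - k) with hP3
  set P4 : ℂ := ∏ k ∈ Finset.range (a+1), ((N - (2+b : ℕ)) - k) with hP4
  set P5 : ℂ := ∏ k ∈ Finset.range (a+b+3), (N - k) with hP5
  have hP1ne : P1 ≠ 0 := Finset.prod_ne_zero_iff.mpr fun k hk =>
    hnzN k (by simp at hk; omega)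
  have hP3ne : P3 ≠ 0 := Finset.prod_ne_zero_iff.mpr fun k hk =>
    hnzN k (by simp at hk; omega)
  have hP5ne : P5 ≠ 0 := Finset.prod_ne_zero_iff.mpr fun k hk =>
    hnzN k (by simp at hk; omega)
  have hP2ne : P2 ≠ 0 := Finset.prod_ne_zero_iff.mpr fun k hk => by
    simp only [Finset.mem_range] at hk
    have e : (N - ((2+a:ℕ):ℂ) - (k:ℂ)) = N - (((2+a+k : ℕ)):ℂ) := by push_cast; ring
    rw [e]; exact hnzN _ (by omega)
  have hP4ne : P4 ≠ 0 := Finset.prod_ne_zero_iff.mpr fun k hk => by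
    simp only [Finset.mem_range] at hk
    have e : (N - ((2+b:ℕ):ℂ) - (k:ℂ)) = N - (((2+b+k : ℕ)):ℂ) := by push_cast; ring
    rw [e]; exact hnzN _ (by omega)
  -- product splitting
  have hP5a : P5 = P1 * (N - ((a+1:ℕ):ℂ)) * P2 := by
    rw [hP5, show a+b+3 = (a+2)+(b+1) from by ring, Finset.prod_range_add,
      Finset.prod_range_succ]
    congr 1
    rw [hP2]
    refine Finset.prod_congr rfl fun k _ => ?_
    push_cast
    ring
  have hP5b : P5 = P3 * (N - ((b+1:ℕ):ℂ)) * P4 := by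
    rw [hP5, show a+b+3 = (b+2)+(a+1) from by ring, Finset.prod_range_add,
      Finset.prod_range_succ]
    congr 1
    rw [hP4]
    refine Finset.prod_congr rfl fun k _ => ?_
    push_cast
    ring
  -- final algebra
  have hFne : ((a+b+2).factorial : ℂ) ≠ 0 := by
    exact Nat.cast_ne_zero.mpr (Nat.factorial_ne_zero _)
  have d1 : (a.factorial : ℂ) / P1 * ((b.factorial : ℂ) / P2)
      = (a.factorial : ℂ) * b.factorial * (N - ((a+1:ℕ):ℂ)) / P5 := by
    rw [div_mul_div_comm, div_eq_div_iff (mul_ne_zero hP1ne hP2ne) hP5ne, hP5a]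
    ring
  have d2 : (b.factorial : ℂ) / P3 * ((a.factorial : ℂ) / P4)
      = (a.factorial : ℂ) * b.factorial * (N - ((b+1:ℕ):ℂ)) / P5 := by
    rw [div_mul_div_comm, div_eq_div_iff (mul_ne_zero hP3ne hP4ne) hP5ne, hP5b]
    ring
  rw [d1, d2]
  rw [div_mul_div_comm, mul_comm (((2+a:ℕ):ℂ) - ((2+b:ℕ):ℂ)) _]
  field_simp
  push_cast
  ring
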